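/- Suppose Ĥ : {(x,y) : 0 ≤ x < α < y ≤ 1} → [0, M(y-x)^{-3}] (for some constant M) is nonnegative, measurable, and satisfies Ĥ(x,y) = ∫_0^x (y-λ)^{-1} Ĥ(λ,y) dλ + ∫_y^1 (ρ-x)^{-1} Ĥ(x,ρ) dρ for all such (x,y). Then Ĥ ≡ 0. -/

import Mathlib

open MeasureTheory Set Filter

/-- Decreasing case: integrand bounded by `C ((c - l)^4)⁻¹` on `Ioo a b` with `b < c`. -/
lemma key_left (C c a b : ℝ) (hC : 0 ≤ C) (hab : a ≤ b) (hbc : b < c) (f : ℝ → ℝ)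
    (h0 : ∀ l ∈ Set.Ioo a b, 0 ≤ f l)
    (hb : ∀ l ∈ Set.Ioo a b, f l ≤ C * ((c - l) ^ 4)⁻¹) :
    ∫ l in Set.Ioo a b, f l ≤ C / 3 * ((c - b) ^ 3)⁻¹ := by
  have huIcc : Set.uIcc a b = Set.Icc a b := Set.uIcc_of_le hab
  have hne : ∀ l ∈ Set.Icc a b, c - l ≠ 0 := fun l hl =>
    ne_of_gt (by linarith [hl.2])
  have hderiv : ∀ l ∈ Set.uIcc a b,
      HasDerivAt (fun l => C / 3 * ((c - l) ^ 3)⁻¹) (C * ((c - l) ^ 4)⁻¹) l := by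
    intro l hl
    rw [huIcc] at hl
    have h1 : HasDerivAt (fun l : ℝ => c - l) (-1) l := by
      simpa using (hasDerivAt_id l).const_sub c
    have h2 := (h1.pow 3).inv (pow_ne_zero 3 (hne l hl))
    have h3 := h2.const_mul (C / 3)
    convert h3 using 1
    have := hne l hl
    all_goals first | rfl | (simp only [Pi.pow_apply]; have := hne l hl; field_simp; ring)
  have hcont : ContinuousOn (fun l => C * ((c - l) ^ 4)⁻¹) (Set.Icc a b) := by
    apply continuousOn_const.mul
    exact (((continuousOn_const.sub continuousOn_id).pow 4).inv₀
      (fun l hl => pow_ne_zero 4 (hne l hl)))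
  have hint : IntervalIntegrable (fun l => C * ((c - l) ^ 4)⁻¹) volume a b := by
    rw [intervalIntegrable_iff_integrableOn_Icc_of_le hab]
    exact hcont.integrableOn_Icc
  have hval : ∫ l in Set.Ioo a b, C * ((c - l) ^ 4)⁻¹
      = C / 3 * ((c - b) ^ 3)⁻¹ - C / 3 * ((c - a) ^ 3)⁻¹ := by
    rw [← MeasureTheory.integral_Ioc_eq_integral_Ioo,
      ← intervalIntegral.integral_of_le hab]
    exact intervalIntegral.integral_eq_sub_of_hasDerivAt hderiv hint
  have hmono : ∫ l in Set.Ioo a b, f l ≤ ∫ l in Set.Ioo a b, C * ((c - l) ^ 4)⁻¹ := by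
    apply MeasureTheory.integral_mono_of_nonneg
    · exact (ae_restrict_iff' measurableSet_Ioo).mpr (Filter.Eventually.of_forall h0)
    · exact hcont.integrableOn_Icc.mono_set Set.Ioo_subset_Icc_self
    · exact (ae_restrict_iff' measurableSet_Ioo).mpr (Filter.Eventually.of_forall hb)
  have hnn : 0 ≤ C / 3 * ((c - a) ^ 3)⁻¹ := by
    have : (0:ℝ) < c - a := by linarith
    positivity
  linarith [hmono, hval.le, hval.ge]

/-- Increasing case: integrand bounded by `C ((r - c)^4)⁻¹` on `Ioo a b` with `c < a`. -/
lemma key_right (C c a b : ℝ) (hC : 0 ≤ C) (hab : a ≤ b) (hca : c < a) (f : ℝ → ℝ)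
    (h0 : ∀ r ∈ Set.Ioo a b, 0 ≤ f r)
    (hb : ∀ r ∈ Set.Ioo a b, f r ≤ C * ((r - c) ^ 4)⁻¹) :
    ∫ r in Set.Ioo a b, f r ≤ C / 3 * ((a - c) ^ 3)⁻¹ := by
  have hne : ∀ r ∈ Set.Icc a b, r - c ≠ 0 := fun r hr =>
    ne_of_gt (by linarith [hr.1])
  have hderiv : ∀ r ∈ Set.uIcc a b,
      HasDerivAt (fun r => -(C / 3) * ((r - c) ^ 3)⁻¹) (C * ((r - c) ^ 4)⁻¹) r := by
    intro r hr
    rw [Set.uIcc_of_le hab] at hr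
    have h1 : HasDerivAt (fun r : ℝ => r - c) 1 r := by
      simpa using (hasDerivAt_id r).sub_const c
    have h2 := (h1.pow 3).inv (pow_ne_zero 3 (hne r hr))
    have h3 := h2.const_mul (-(C / 3))
    convert h3 using 1
    have := hne r hr
    all_goals first | rfl | (simp only [Pi.pow_apply]; have := hne r hr; field_simp; ring)
  have hcont : ContinuousOn (fun r => C * ((r - c) ^ 4)⁻¹) (Set.Icc a b) := by
    apply continuousOn_const.mul
    exact (((continuousOn_id.sub continuousOn_const).pow 4).inv₀
      (fun r hr => pow_ne_zero 4 (hne r hr)))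
  have hint : IntervalIntegrable (fun r => C * ((r - c) ^ 4)⁻¹) volume a b := by
    rw [intervalIntegrable_iff_integrableOn_Icc_of_le hab]
    exact hcont.integrableOn_Icc
  have hval : ∫ r in Set.Ioo a b, C * ((r - c) ^ 4)⁻¹
      = -(C / 3) * ((b - c) ^ 3)⁻¹ - -(C / 3) * ((a - c) ^ 3)⁻¹ := by
    rw [← MeasureTheory.integral_Ioc_eq_integral_Ioo,
      ← intervalIntegral.integral_of_le hab]
    exact intervalIntegral.integral_eq_sub_of_hasDerivAt hderiv hint
  have hmono : ∫ r in Set.Ioo a b, f r ≤ ∫ r in Set.Ioo a b, C * ((r - c) ^ 4)⁻¹ := by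
    apply MeasureTheory.integral_mono_of_nonneg
    · exact (ae_restrict_iff' measurableSet_Ioo).mpr (Filter.Eventually.of_forall h0)
    · exact hcont.integrableOn_Icc.mono_set Set.Ioo_subset_Icc_self
    · exact (ae_restrict_iff' measurableSet_Ioo).mpr (Filter.Eventually.of_forall hb)
  have hnn : 0 ≤ C / 3 * ((b - c) ^ 3)⁻¹ := by
    have : (0:ℝ) < b - c := by linarith
    positivity
  linarith [hmono, hval.le, hval.ge]

/-- Uniqueness: if `Ĥ` is nonnegative, measurable, bounded by `M (y-x)⁻³` on
`{0 ≤ x < α < y ≤ 1}`, and satisfies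
`Ĥ(x,y) = ∫_0^x (y-λ)⁻¹ Ĥ(λ,y) dλ + ∫_y^1 (ρ-x)⁻¹ Ĥ(x,ρ) dρ` there, then `Ĥ ≡ 0`
on that region. -/
theorem stmt_11 (α M : ℝ) (hα0 : 0 < α) (hα1 : α < 1)
    (H : ℝ → ℝ → ℝ) (hmeas : Measurable (Function.uncurry H))
    (hnonneg : ∀ x y, 0 ≤ x → x < α → α < y → y ≤ 1 → 0 ≤ H x y)
    (hbound : ∀ x y, 0 ≤ x → x < α → α < y → y ≤ 1 → H x y ≤ M * ((y - x) ^ 3)⁻¹)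
    (heq : ∀ x y, 0 ≤ x → x < α → α < y → y ≤ 1 →
      H x y = (∫ l in Ioo (0 : ℝ) x, (y - l)⁻¹ * H l y)
        + ∫ r in Ioo y 1, (r - x)⁻¹ * H x r) :
    ∀ x y, 0 ≤ x → x < α → α < y → y ≤ 1 → H x y = 0 := by
  -- M is nonnegative
  have hM : 0 ≤ M := by
    set x := α / 2
    set y := (α + 1) / 2
    have hx : 0 ≤ x := by positivity
    have hxα : x < α := by simp only [x]; linarith
    have hαy : α < y := by simp only [y]; linarith
    have hy1 : y ≤ 1 := by simp only [y]; linarith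
    have h0 := hnonneg x y hx hxα hαy hy1
    have h1 := hbound x y hx hxα hαy hy1
    have hpos : (0:ℝ) < ((y - x) ^ 3)⁻¹ := by
      have : (0:ℝ) < y - x := by linarith
      positivity
    nlinarith
  have claim : ∀ r : ℕ, ∀ x y, 0 ≤ x → x < α → α < y → y ≤ 1 →
      H x y ≤ (2/3 : ℝ) ^ r * M * ((y - x) ^ 3)⁻¹ := by
    intro r
    induction r with
    | zero => simpa using hbound
    | succ n ih =>
      intro x y hx hxα hαy hy1
      have hxy : x < y := hxα.trans hαy
      set C := (2/3 : ℝ) ^ n * M with hCdef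
      have hC : 0 ≤ C := by positivity
      rw [heq x y hx hxα hαy hy1]
      have h1 : ∫ l in Ioo (0 : ℝ) x, (y - l)⁻¹ * H l y ≤ C / 3 * ((y - x) ^ 3)⁻¹ := by
        apply key_left C y 0 x hC hx hxy
        · intro l hl
          have hHl := hnonneg l y hl.1.le (hl.2.trans hxα) hαy hy1
          have : (0:ℝ) < y - l := by linarith [hl.2]
          positivity
        · intro l hl
          have hyl : (0:ℝ) < y - l := by linarith [hl.2]
          have hHl := ih l y hl.1.le (hl.2.trans hxα) hαy hy1
          calc (y - l)⁻¹ * H l y ≤ (y - l)⁻¹ * (C * ((y - l) ^ 3)⁻¹) := by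
                exact mul_le_mul_of_nonneg_left hHl (by positivity)
            _ = C * ((y - l) ^ 4)⁻¹ := by
                field_simp
      have h2 : ∫ r in Ioo y 1, (r - x)⁻¹ * H x r ≤ C / 3 * ((y - x) ^ 3)⁻¹ := by
        apply key_right C x y 1 hC hy1 hxy
        · intro r hr
          have hHr := hnonneg x r hx hxα (hαy.trans hr.1) hr.2.le
          have : (0:ℝ) < r - x := by linarith [hr.1]
          positivity
        · intro r hr
          have hrx : (0:ℝ) < r - x := by linarith [hr.1]
          have hHr := ih x r hx hxα (hαy.trans hr.1) hr.2.le
          calc (r - x)⁻¹ * H x r ≤ (r - x)⁻¹ * (C * ((r - x) ^ 3)⁻¹) := by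
                exact mul_le_mul_of_nonneg_left hHr (by positivity)
            _ = C * ((r - x) ^ 4)⁻¹ := by
                field_simp
      have : (2/3 : ℝ) ^ (n + 1) * M * ((y - x) ^ 3)⁻¹
          = C / 3 * ((y - x) ^ 3)⁻¹ + C / 3 * ((y - x) ^ 3)⁻¹ := by
        rw [hCdef, pow_succ]; ring
      linarith
  intro x y hx hxα hαy hy1
  have hxy : x < y := hxα.trans hαy
  have htend : Tendsto (fun r : ℕ => (2/3 : ℝ) ^ r * M * ((y - x) ^ 3)⁻¹)
      atTop (nhds 0) := by
    have h := tendsto_pow_atTop_nhds_zero_of_lt_one (by norm_num : (0:ℝ) ≤ 2/3)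
      (by norm_num : (2/3 : ℝ) < 1)
    have := (h.mul_const M).mul_const (((y - x) ^ 3)⁻¹)
    simpa using this
  have hle : H x y ≤ 0 :=
    ge_of_tendsto' htend (fun r => claim r x y hx hxα hαy hy1)
  exact le_antisymm hle (hnonneg x y hx hxα hαy hy1)
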